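/- Let E be a topological graph. The following conditions are equivalent: (i) E is minimal (the only closed invariant subsets of E⁰ are ∅ and E⁰); (ii) for every v ∈ E⁰ and every negative orbit e of v, the orbit space Orb(v, e) is dense in E⁰; (iii) for every non-empty open V ⊆ E⁰, S(H(V)) = E⁰. -/

import Mathlib

set_option linter.unusedSectionVars false
set_option maxHeartbeats 1000000


open Set Topology

variable {E0 E1 : Type*} [TopologicalSpace E0] [TopologicalSpace E1]

/-- A set is positively invariant if the range of every edge with domain in it lies in it. -/
def PosInv (d r : E1 → E0) (X : Set E0) : Prop := ∀ e : E1, d e ∈ X → r e ∈ X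

/-- Sources: `E⁰ \ closure (r (E¹))`. -/
def Sce (r : E1 → E0) : Set E0 := (closure (Set.range r))ᶜ

/-- Vertices having a neighborhood with compact `r`-preimage. -/
def FinSet (r : E1 → E0) : Set E0 := {v | ∃ V ∈ 𝓝 v, IsCompact (r ⁻¹' V)}

/-- Regular vertices. -/
def Rg (r : E1 → E0) : Set E0 := FinSet r \ closure (Sce r)

/-- Singular vertices. -/
def Sg (r : E1 → E0) : Set E0 := (Rg r)ᶜ

/-- A set is negatively invariant if every regular vertex in it receives an edge from it. -/
def NegInv (d r : E1 → E0) (X : Set E0) : Prop :=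
  ∀ v ∈ X ∩ Rg r, ∃ e : E1, r e = v ∧ d e ∈ X

/-- Invariant = positively and negatively invariant. -/
def Invariant (d r : E1 → E0) (X : Set E0) : Prop := PosInv d r X ∧ NegInv d r X

/-- The chain condition for a finite path `(e 0, e 1, …, e n)` of edges:
`d (e k) = r (e (k+1))`. -/
def IsPath (d r : E1 → E0) {n : ℕ} (e : Fin (n + 1) → E1) : Prop :=
  ∀ i : Fin n, d (e i.castSucc) = r (e i.succ)

/-- The positive orbit `Orb⁺(v)`: ranges of finite paths with domain `v`. -/
def OrbPlus (d r : E1 → E0) (v : E0) : Set E0 :=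
  {v} ∪ {w | ∃ n : ℕ, ∃ e : Fin (n + 1) → E1,
    IsPath d r e ∧ d (e (Fin.last n)) = v ∧ r (e 0) = w}

/-- An infinite path of edges. -/
def IsInfPath (d r : E1 → E0) (e : ℕ → E1) : Prop := ∀ k : ℕ, d (e k) = r (e (k + 1))

/-- `S` is the negative orbit space `Orb⁻(v, e)` of some negative orbit `e` of `v`:
either `v` itself (when `v` is singular), or a finite path ending at a singular vertex
with range `v`, or an infinite path with range `v`. -/
def IsNegOrbitSet (d r : E1 → E0) (v : E0) (S : Set E0) : Prop :=
  (v ∈ Sg r ∧ S = {v}) ∨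
  (∃ n : ℕ, ∃ e : Fin (n + 1) → E1, IsPath d r e ∧ r (e 0) = v ∧
    d (e (Fin.last n)) ∈ Sg r ∧ S = insert v (Set.range (d ∘ e))) ∨
  (∃ e : ℕ → E1, IsInfPath d r e ∧ r (e 0) = v ∧ S = insert v (Set.range (d ∘ e)))

/-- The orbit space `Orb(v, e) = ⋃_{v' ∈ Orb⁻(v,e)} Orb⁺(v')`, expressed in terms of the
negative orbit space `S = Orb⁻(v, e)`. -/
def Orb (d r : E1 → E0) (S : Set E0) : Set E0 := ⋃ v ∈ S, OrbPlus d r v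

/-- A maximal head: a non-empty closed invariant set in which any two points can be
approximated by the positive orbit of a common vertex. -/
def MaximalHead (d r : E1 → E0) (X : Set E0) : Prop :=
  X.Nonempty ∧ IsClosed X ∧ Invariant d r X ∧
  ∀ v1 ∈ X, ∀ v2 ∈ X, ∀ V1 ∈ 𝓝 v1, ∀ V2 ∈ 𝓝 v2,
    ∃ w ∈ X, (OrbPlus d r w ∩ V1).Nonempty ∧ (OrbPlus d r w ∩ V2).Nonempty

/-- Hereditary set: `d (r⁻¹ (V)) ⊆ V`. -/
def Hereditary (d r : E1 → E0) (V : Set E0) : Prop := d '' (r ⁻¹' V) ⊆ V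

/-- Saturated set: every regular vertex all of whose received edges have domain in `V`
belongs to `V`. -/
def Saturated (d r : E1 → E0) (V : Set E0) : Prop :=
  ∀ v ∈ Rg r, d '' (r ⁻¹' {v}) ⊆ V → v ∈ V

/-- `H(V) = ⋃ₙ dⁿ ((rⁿ)⁻¹ (V))`. -/
def HSet (d r : E1 → E0) (V : Set E0) : Set E0 :=
  V ∪ {w | ∃ n : ℕ, ∃ e : Fin (n + 1) → E1,
    IsPath d r e ∧ r (e 0) ∈ V ∧ d (e (Fin.last n)) = w}

/-- The sequence `V₀ = V`, `V_{k+1} = V_k ∪ {v ∈ E⁰_rg : d (r⁻¹ (v)) ⊆ V_k}`. -/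
def SatSeq (d r : E1 → E0) (V : Set E0) : ℕ → Set E0
  | 0 => V
  | k + 1 => SatSeq d r V k ∪ {v | v ∈ Rg r ∧ d '' (r ⁻¹' {v}) ⊆ SatSeq d r V k}

/-- The saturation `S(V) = ⋃ₖ V_k`. -/
def SatSet (d r : E1 → E0) (V : Set E0) : Set E0 := ⋃ k, SatSeq d r V k

/-- Sources of the subgraph on a closed positively invariant set `X`, viewed in `E⁰`:
`X⁰_sce = X⁰ \ closure_{X⁰} (r (X¹))` where `X¹ = d⁻¹ (X⁰)`. -/
def SceIn (d r : E1 → E0) (X : Set E0) : Set E0 := X \ closure (r '' (d ⁻¹' X))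

/-- Vertices of the subgraph on `X` having a relative neighborhood with compact
`r`-preimage in `X¹ = d⁻¹(X⁰)`. -/
def FinIn (d r : E1 → E0) (X : Set E0) : Set E0 :=
  {v | v ∈ X ∧ ∃ V ∈ 𝓝 v, IsCompact (r ⁻¹' (V ∩ X) ∩ d ⁻¹' X)}

/-- Infinite receivers of the subgraph on `X`. -/
def InfIn (d r : E1 → E0) (X : Set E0) : Set E0 := X \ FinIn d r X

/-- Regular vertices of the subgraph on `X`. -/
def RgIn (d r : E1 → E0) (X : Set E0) : Set E0 := FinIn d r X \ closure (SceIn d r X)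

/-- Singular vertices of the subgraph on `X`. -/
def SgIn (d r : E1 → E0) (X : Set E0) : Set E0 := X \ RgIn d r X

section Lemmas

variable {d r : E1 → E0}

lemma isPath_tail {n : ℕ} {e : Fin (n + 2) → E1} (he : IsPath d r e) :
    IsPath d r (e ∘ Fin.succ) := by
  intro i
  have := he i.succ
  simpa using this

lemma path_d_mem {X : Set E0} (hX : PosInv d r X) :
    ∀ {n : ℕ} (e : Fin (n + 1) → E1), IsPath d r e → d (e (Fin.last n)) ∈ X →
      ∀ i, d (e i) ∈ X := by
  intro n
  induction n with
  | zero => intro e _ h i; fin_cases i; simpa using h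
  | succ m ih =>
    intro e he h i
    have htail := isPath_tail he
    have hlast : d ((e ∘ Fin.succ) (Fin.last m)) ∈ X := by
      simpa [Function.comp, Fin.succ_last] using h
    have hall := ih (e ∘ Fin.succ) htail hlast
    rcases Fin.eq_zero_or_eq_succ i with rfl | ⟨j, rfl⟩
    · have h1 : d (e 1) ∈ X := by simpa using hall 0
      have hr1 : r (e 1) ∈ X := hX _ h1
      have h0 : d (e (0 : Fin (m+1)).castSucc) = r (e (0 : Fin (m+1)).succ) := he 0
      simp only [Fin.castSucc_zero] at h0
      rw [h0]; simpa using hr1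
    · simpa using hall j

lemma orbPlus_subset {X : Set E0} (hX : PosInv d r X) {v : E0} (hv : v ∈ X) :
    OrbPlus d r v ⊆ X := by
  rintro w (rfl | ⟨n, e, he, hlast, rfl⟩)
  · exact hv
  · have h0 : d (e 0) ∈ X := path_d_mem hX e he (hlast ▸ hv) 0
    exact hX _ h0

lemma orb_subset {X : Set E0} (hX : PosInv d r X) {S : Set E0} (hS : S ⊆ X) :
    Orb d r S ⊆ X := by
  intro w hw
  rcases mem_iUnion₂.1 hw with ⟨v, hv, hw⟩
  exact orbPlus_subset hX (hS hv) hw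

lemma self_mem_orbPlus (v : E0) : v ∈ OrbPlus d r v := Or.inl rfl

lemma subset_orb (S : Set E0) : S ⊆ Orb d r S := fun v hv =>
  mem_iUnion₂.2 ⟨v, hv, self_mem_orbPlus v⟩

-- prepending an edge to OrbPlus
lemma orbPlus_extend {v w : E0} (hw : w ∈ OrbPlus d r v) (f : E1) (hf : d f = w) :
    r f ∈ OrbPlus d r v := by
  rcases hw with rfl | ⟨n, e, he, hlast, hr0⟩
  · exact Or.inr ⟨0, fun _ => f, fun i => i.elim0, hf, rfl⟩
  · refine Or.inr ⟨n + 1, Fin.cons f e, ?_, ?_, ?_⟩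
    · intro i
      rcases Fin.eq_zero_or_eq_succ i with rfl | ⟨j, rfl⟩
      · simpa [hf] using hr0.symm
      · have := he j
        simpa using this
    · have : Fin.last (n + 1) = (Fin.last n).succ := by simp [Fin.succ_last]
      rw [this]; simpa using hlast
    · simp

lemma posInv_orbPlus (v : E0) : PosInv d r (OrbPlus d r v) :=
  fun f hf => orbPlus_extend hf f rfl

lemma posInv_orb (S : Set E0) : PosInv d r (Orb d r S) := by
  intro f hf
  rcases mem_iUnion₂.1 hf with ⟨v, hv, hw⟩
  exact mem_iUnion₂.2 ⟨v, hv, orbPlus_extend hw f rfl⟩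

end Lemmas
section Lemmas2

variable {d r : E1 → E0}

lemma negInv_orb {v : E0} {S : Set E0} (hS : IsNegOrbitSet d r v S) :
    NegInv d r (Orb d r S) := by
  rintro w ⟨hw, hreg⟩
  rcases mem_iUnion₂.1 hw with ⟨v', hv', hw'⟩
  rcases hw' with rfl | ⟨n, e, he, hlast, hr0⟩
  case inr =>
    refine ⟨e 0, hr0, ?_⟩
    have : d (e 0) ∈ OrbPlus d r v' :=
      path_d_mem (posInv_orbPlus v') e he (by rw [hlast]; exact self_mem_orbPlus v') 0
    exact mem_iUnion₂.2 ⟨v', hv', this⟩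
  case inl =>
    rcases hS with ⟨hsg, rfl⟩ | ⟨n, e, he, hr0, hsg, rfl⟩ | ⟨e, he, hr0, rfl⟩
    · rcases hv' with rfl
      exact absurd hreg hsg
    · rcases hv' with rfl | ⟨i, hi⟩
      · refine ⟨e 0, hr0, subset_orb _ ?_⟩
        exact Or.inr ⟨0, rfl⟩
      · by_cases hil : i = Fin.last n
        · exfalso
          have hws : w ∈ Sg r := by rw [← hi, hil]; exact hsg
          exact hws hreg
        · obtain ⟨j, rfl⟩ : ∃ j : Fin n, j.castSucc = i := by
            rcases Fin.eq_castSucc_or_eq_last i with ⟨j, rfl⟩ | h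
            · exact ⟨j, rfl⟩
            · exact absurd h hil
          refine ⟨e j.succ, ?_, subset_orb _ (Or.inr ⟨j.succ, rfl⟩)⟩
          rw [← he j]; exact hi
    · rcases hv' with rfl | ⟨k, hk⟩
      · exact ⟨e 0, hr0, subset_orb _ (Or.inr ⟨0, rfl⟩)⟩
      · refine ⟨e (k + 1), ?_, subset_orb _ (Or.inr ⟨k + 1, rfl⟩)⟩
        rw [← he k]; exact hk

end Lemmas2
section Lemmas3

variable {d r : E1 → E0}

lemma isOpen_finSet : IsOpen (FinSet r) := by
  rw [isOpen_iff_mem_nhds]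
  rintro v ⟨V, hV, hK⟩
  filter_upwards [interior_mem_nhds.2 hV] with w hw
  exact ⟨V, mem_nhds_iff.2 ⟨interior V, interior_subset, isOpen_interior, hw⟩, hK⟩

lemma isOpen_rg : IsOpen (Rg r) :=
  isOpen_finSet.sdiff isClosed_closure

lemma posInv_closure (hd : IsLocalHomeomorph d) (hr : Continuous r) {X : Set E0}
    (hX : PosInv d r X) : PosInv d r (closure X) := by
  intro e he
  obtain ⟨φ, heφ, rfl⟩ := hd e
  rw [mem_closure_iff_nhds]
  intro t ht
  have hcont : ContinuousAt (r ∘ φ.symm) (φ e) := by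
    refine ContinuousAt.comp ?_ (φ.continuousAt_symm (φ.map_source heφ))
    rw [φ.left_inv heφ]
    exact hr.continuousAt
  have hmem : r e ∈ t := mem_of_mem_nhds ht
  have h1 : (r ∘ φ.symm) ⁻¹' t ∈ 𝓝 (φ e) := by
    apply hcont
    rwa [show (r ∘ φ.symm) (φ e) = r e by simp [φ.left_inv heφ]]
  have h2 : φ.target ∈ 𝓝 (φ e) := φ.open_target.mem_nhds (φ.map_source heφ)
  rcases mem_closure_iff_nhds.1 he _ (Filter.inter_mem h1 h2) with ⟨x, ⟨hx1, hx2⟩, hxX⟩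
  refine ⟨r (φ.symm x), hx1, ?_⟩
  apply hX
  rwa [show (φ : E1 → E0) (φ.symm x) = x from φ.right_inv hx2]

lemma negInv_closure [T2Space E0] (hd : IsLocalHomeomorph d) (hr : Continuous r) {X : Set E0}
    (hX : NegInv d r X) : NegInv d r (closure X) := by
  rintro v ⟨hv, hreg⟩
  obtain ⟨V, hV, hK⟩ := hreg.1
  have hdX : IsClosed (d ⁻¹' closure X) := isClosed_closure.preimage hd.continuous
  have hC : IsCompact (r ⁻¹' V ∩ d ⁻¹' closure X) := hK.inter_right hdX
  have hrC : IsClosed (r '' (r ⁻¹' V ∩ d ⁻¹' closure X)) := (hC.image hr).isClosed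
  by_contra hcon
  push_neg at hcon
  have hvnot : v ∉ r '' (r ⁻¹' V ∩ d ⁻¹' closure X) := by
    rintro ⟨e, ⟨_, he2⟩, rfl⟩
    exact hcon e rfl he2
  have hN : (interior V ∩ (r '' (r ⁻¹' V ∩ d ⁻¹' closure X))ᶜ ∩ Rg r) ∈ 𝓝 v := by
    refine Filter.inter_mem (Filter.inter_mem (interior_mem_nhds.2 hV) ?_)
      (isOpen_rg.mem_nhds hreg)
    exact hrC.isOpen_compl.mem_nhds hvnot
  rcases mem_closure_iff_nhds.1 hv _ hN with ⟨x, ⟨⟨hx1, hx2⟩, hx3⟩, hxX⟩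
  obtain ⟨e, hre, hde⟩ := hX x ⟨hxX, hx3⟩
  apply hx2
  exact ⟨e, ⟨show r e ∈ V by rw [hre]; exact interior_subset hx1, subset_closure hde⟩, hre⟩

lemma invariant_closure [T2Space E0] (hd : IsLocalHomeomorph d) (hr : Continuous r) {X : Set E0}
    (hX : Invariant d r X) : Invariant d r (closure X) :=
  ⟨posInv_closure hd hr hX.1, negInv_closure hd hr hX.2⟩

end Lemmas3
section Lemmas4

variable {d r : E1 → E0}

/-- targets of paths of length `n+1` starting in `V`. -/
def TSet (d r : E1 → E0) (V : Set E0) (n : ℕ) : Set E0 :=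
  {w | ∃ e : Fin (n + 1) → E1, IsPath d r e ∧ r (e 0) ∈ V ∧ d (e (Fin.last n)) = w}

lemma isPath_init' {n : ℕ} {e : Fin (n + 2) → E1} (he : IsPath d r e) :
    IsPath d r (e ∘ Fin.castSucc) := by
  intro i
  have := he i.castSucc
  simpa using this

lemma tSet_zero (V : Set E0) : TSet d r V 0 = d '' (r ⁻¹' V) := by
  ext w
  constructor
  · rintro ⟨e, _, h0, hl⟩
    exact ⟨e 0, h0, hl⟩
  · rintro ⟨f, hf, rfl⟩
    exact ⟨fun _ => f, fun i => i.elim0, hf, rfl⟩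

lemma tSet_succ (V : Set E0) (n : ℕ) : TSet d r V (n + 1) = d '' (r ⁻¹' TSet d r V n) := by
  ext w
  constructor
  · rintro ⟨e, he, h0, hl⟩
    refine ⟨e (Fin.last (n + 1)), ⟨e ∘ Fin.castSucc, isPath_init' he, ?_, ?_⟩, hl⟩
    · simpa using h0
    · have := he (Fin.last n)
      simpa [Fin.succ_last] using this
  · rintro ⟨f, ⟨e, he, h0, hl⟩, rfl⟩
    refine ⟨Fin.snoc e f, ?_, ?_, ?_⟩
    · intro i
      rcases Fin.eq_castSucc_or_eq_last i with ⟨j, rfl⟩ | rfl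
      · have := he j
        simpa [← Fin.castSucc_succ, Fin.snoc_castSucc] using this
      · simpa [Fin.succ_last, Fin.snoc_castSucc, Fin.snoc_last] using hl
    · rw [show (0 : Fin (n + 2)) = Fin.castSucc 0 from Fin.castSucc_zero.symm, Fin.snoc_castSucc]
      exact h0
    · simp [Fin.snoc_last]

lemma hSet_eq (V : Set E0) : HSet d r V = V ∪ ⋃ n, TSet d r V n := by
  ext w
  simp [HSet, TSet, mem_iUnion]

lemma isOpen_tSet (hd : IsLocalHomeomorph d) (hr : Continuous r) {V : Set E0}
    (hV : IsOpen V) (n : ℕ) : IsOpen (TSet d r V n) := by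
  induction n with
  | zero => rw [tSet_zero]; exact hd.isOpenMap _ (hV.preimage hr)
  | succ m ih => rw [tSet_succ]; exact hd.isOpenMap _ (ih.preimage hr)

lemma isOpen_hSet (hd : IsLocalHomeomorph d) (hr : Continuous r) {V : Set E0}
    (hV : IsOpen V) : IsOpen (HSet d r V) := by
  rw [hSet_eq]
  exact hV.union (isOpen_iUnion (isOpen_tSet hd hr hV))

lemma hereditary_hSet (V : Set E0) : Hereditary d r (HSet d r V) := by
  rintro w ⟨f, hf, rfl⟩
  rw [hSet_eq] at hf ⊢
  rcases hf with hf | hf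
  · exact Or.inr (mem_iUnion.2 ⟨0, by rw [tSet_zero]; exact ⟨f, hf, rfl⟩⟩)
  · rcases mem_iUnion.1 hf with ⟨n, hn⟩
    exact Or.inr (mem_iUnion.2 ⟨n + 1, by rw [tSet_succ]; exact ⟨f, hn, rfl⟩⟩)

/-- key openness lemma for the saturation step -/
lemma isOpen_sat_step [T2Space E0] (hd : Continuous d) (hr : Continuous r) {W : Set E0} (hW : IsOpen W) :
    IsOpen {v | v ∈ Rg r ∧ d '' (r ⁻¹' {v}) ⊆ W} := by
  rw [isOpen_iff_mem_nhds]
  rintro v ⟨hreg, hsub⟩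
  obtain ⟨V, hV, hK⟩ := hreg.1
  have hC : IsCompact (r ⁻¹' V ∩ d ⁻¹' Wᶜ) := hK.inter_right (hW.isClosed_compl.preimage hd)
  have hrC : IsClosed (r '' (r ⁻¹' V ∩ d ⁻¹' Wᶜ)) := (hC.image hr).isClosed
  have hvnot : v ∉ r '' (r ⁻¹' V ∩ d ⁻¹' Wᶜ) := by
    rintro ⟨e, ⟨_, he2⟩, rfl⟩
    exact he2 (hsub ⟨e, rfl, rfl⟩)
  have hN : interior V ∩ (r '' (r ⁻¹' V ∩ d ⁻¹' Wᶜ))ᶜ ∩ Rg r ∈ 𝓝 v :=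
    Filter.inter_mem (Filter.inter_mem (interior_mem_nhds.2 hV) (hrC.isOpen_compl.mem_nhds hvnot))
      (isOpen_rg.mem_nhds hreg)
  filter_upwards [hN] with w ⟨⟨hw1, hw2⟩, hw3⟩
  refine ⟨hw3, ?_⟩
  rintro x ⟨e, he, rfl⟩
  by_contra hx
  refine hw2 ⟨e, ⟨?_, hx⟩, he⟩
  show r e ∈ V
  rw [show r e = w from he]
  exact interior_subset hw1

end Lemmas4
section Lemmas5

variable {d r : E1 → E0}

lemma satSeq_mono (V : Set E0) : Monotone (SatSeq d r V) :=
  monotone_nat_of_le_succ fun k => by rw [SatSeq]; exact subset_union_left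

lemma isOpen_satSeq [T2Space E0] (hd : Continuous d) (hr : Continuous r) {V : Set E0}
    (hV : IsOpen V) (k : ℕ) : IsOpen (SatSeq d r V k) := by
  induction k with
  | zero => exact hV
  | succ m ih => exact ih.union (isOpen_sat_step hd hr ih)

lemma isOpen_satSet [T2Space E0] (hd : Continuous d) (hr : Continuous r) {V : Set E0}
    (hV : IsOpen V) : IsOpen (SatSet d r V) :=
  isOpen_iUnion (isOpen_satSeq hd hr hV)

lemma hereditary_satSeq {V : Set E0} (hV : Hereditary d r V) (k : ℕ) :
    Hereditary d r (SatSeq d r V k) := by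
  induction k with
  | zero => exact hV
  | succ m ih =>
    rintro w ⟨f, hf, rfl⟩
    rcases hf with hf | ⟨_, hsub⟩
    · exact Or.inl (ih ⟨f, hf, rfl⟩)
    · exact Or.inl (hsub ⟨f, rfl, rfl⟩)

lemma hereditary_satSet {V : Set E0} (hV : Hereditary d r V) :
    Hereditary d r (SatSet d r V) := by
  rintro w ⟨f, hf, rfl⟩
  rcases mem_iUnion.1 hf with ⟨k, hk⟩
  exact mem_iUnion.2 ⟨k, hereditary_satSeq hV k ⟨f, hk, rfl⟩⟩

lemma posInv_compl_satSet {V : Set E0} (hV : Hereditary d r V) :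
    PosInv d r (SatSet d r V)ᶜ := by
  intro e he hre
  exact he (hereditary_satSet hV ⟨e, hre, rfl⟩)

lemma negInv_compl_satSet [T2Space E0] (hd : Continuous d) (hr : Continuous r)
    {V : Set E0} (hV : IsOpen V) : NegInv d r (SatSet d r V)ᶜ := by
  rintro v ⟨hv, hreg⟩
  by_contra hcon
  push_neg at hcon
  apply hv
  have hsub : d '' (r ⁻¹' {v}) ⊆ SatSet d r V := by
    rintro w ⟨e, he, rfl⟩
    have := hcon e he
    simpa using this
  obtain ⟨W, hW, hK⟩ := hreg.1
  have hKv : IsCompact (r ⁻¹' {v}) := hK.of_isClosed_subset (isClosed_singleton.preimage hr)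
    (preimage_mono (singleton_subset_iff.2 (mem_of_mem_nhds hW)))
  have hKd : IsCompact (d '' (r ⁻¹' {v})) := hKv.image hd
  obtain ⟨t, ht⟩ := hKd.elim_finite_subcover (SatSeq d r V) (isOpen_satSeq hd hr hV)
    (fun x hx => hsub hx)
  have hN : ∀ i ∈ t, SatSeq d r V i ⊆ SatSeq d r V (t.sup id) := fun i hi =>
    satSeq_mono V (Finset.le_sup (f := id) hi)
  have hfin : d '' (r ⁻¹' {v}) ⊆ SatSeq d r V (t.sup id) := by
    intro x hx
    rcases mem_iUnion₂.1 (ht hx) with ⟨i, hi, hxi⟩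
    exact hN i hi hxi
  exact mem_iUnion.2 ⟨t.sup id + 1, Or.inr ⟨hreg, hfin⟩⟩

end Lemmas5
section Lemmas6

variable {d r : E1 → E0}

lemma exists_negOrbitSet {X : Set E0} (hX : NegInv d r X) {v : E0} (hv : v ∈ X) :
    ∃ S : Set E0, IsNegOrbitSet d r v S ∧ S ⊆ X := by
  classical
  set P : E0 → Prop := fun w => ∃ e, r e = w ∧ d e ∈ X with hP
  let u : ℕ → E0 := fun k =>
    Nat.rec v (fun _ w => if h : P w then d h.choose else w) k
  have hu0 : u 0 = v := rfl
  have hstep : ∀ (k : ℕ) (h : P (u k)), u (k + 1) = d h.choose := fun k h => dif_pos h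
  have huX : ∀ k, u k ∈ X := by
    intro k
    induction k with
    | zero => exact hv
    | succ m ih =>
      rcases Classical.em (P (u m)) with h | h
      · rw [hstep m h]; exact h.choose_spec.2
      · have : u (m + 1) = u m := dif_neg h
        rw [this]; exact ih
  by_cases hall : ∀ k, u k ∈ Rg r
  · -- infinite path
    have hPk : ∀ k, P (u k) := fun k => hX (u k) ⟨huX k, hall k⟩
    let e : ℕ → E1 := fun k => (hPk k).choose
    have hre : ∀ k, r (e k) = u k := fun k => (hPk k).choose_spec.1
    have hde : ∀ k, d (e k) = u (k + 1) := fun k => (hstep k (hPk k)).symm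
    refine ⟨insert v (Set.range (d ∘ e)), Or.inr (Or.inr ⟨e, ?_, ?_, rfl⟩), ?_⟩
    · intro k
      rw [hde k, hre (k + 1)]
    · rw [hre 0, hu0]
    · rw [insert_subset_iff]
      refine ⟨hv, ?_⟩
      rintro w ⟨k, rfl⟩
      show d (e k) ∈ X
      rw [hde k]; exact huX (k + 1)
  · push_neg at hall
    have hfind := Nat.find_spec hall
    rcases hk : Nat.find hall with _ | n
    · -- v is singular
      rw [hk] at hfind
      refine ⟨{v}, Or.inl ⟨?_, rfl⟩, singleton_subset_iff.2 hv⟩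
      rw [← hu0]; exact hfind
    · have hmin : ∀ j, j ≤ n → u j ∈ Rg r := by
        intro j hj
        by_contra hc
        have hle : Nat.find hall ≤ j := Nat.find_le hc
        omega
      have hP' : ∀ i : Fin (n + 1), P (u i.val) := fun i =>
        hX (u i.val) ⟨huX i.val, hmin i.val (by omega)⟩
      let e : Fin (n + 1) → E1 := fun i => (hP' i).choose
      have hre : ∀ i, r (e i) = u i.val := fun i => (hP' i).choose_spec.1
      have hde : ∀ i, d (e i) = u (i.val + 1) := fun i => (hstep i.val (hP' i)).symm
      refine ⟨insert v (Set.range (d ∘ e)), Or.inr (Or.inl ⟨n, e, ?_, ?_, ?_, rfl⟩), ?_⟩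
      · intro i
        rw [hde i.castSucc, hre i.succ]
        simp
      · rw [hre 0]; simpa using hu0
      · show d (e (Fin.last n)) ∈ Sg r
        rw [hde (Fin.last n)]
        have : u (n + 1) ∉ Rg r := by rw [← hk]; exact hfind
        simpa [Fin.last, Sg] using this
      · rw [insert_subset_iff]
        refine ⟨hv, ?_⟩
        rintro w ⟨i, rfl⟩
        show d (e i) ∈ X
        rw [hde i]; exact huX (i.val + 1)

end Lemmas6
theorem stmt18 [LocallyCompactSpace E0] [T2Space E0] [LocallyCompactSpace E1] [T2Space E1]
    (d r : E1 → E0) (hd : IsLocalHomeomorph d) (hr : Continuous r) :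
    List.TFAE
      [∀ X : Set E0, IsClosed X → Invariant d r X → X = ∅ ∨ X = Set.univ,
       ∀ (v : E0) (S : Set E0), IsNegOrbitSet d r v S → Dense (Orb d r S),
       ∀ V : Set E0, IsOpen V → V.Nonempty →
         SatSet d r (HSet d r V) = Set.univ] := by
  tfae_have 1 → 2 := by
    intro h1 v S hS
    have hvS : v ∈ S := by
      rcases hS with ⟨_, rfl⟩ | ⟨_, _, _, _, _, rfl⟩ | ⟨_, _, _, rfl⟩ <;> simp
    have hinv : Invariant d r (Orb d r S) := ⟨posInv_orb S, negInv_orb hS⟩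
    have hcl : Invariant d r (closure (Orb d r S)) := invariant_closure hd hr hinv
    rcases h1 _ isClosed_closure hcl with h | h
    · exfalso
      have hvc : v ∈ closure (Orb d r S) := subset_closure (subset_orb S hvS)
      rw [h] at hvc
      exact hvc
    · exact dense_iff_closure_eq.2 h
  tfae_have 2 → 3 := by
    intro h2 V hVopen hVne
    by_contra hne
    have hXne : (SatSet d r (HSet d r V))ᶜ.Nonempty := nonempty_compl.2 hne
    obtain ⟨v, hv⟩ := hXne
    have hneg : NegInv d r (SatSet d r (HSet d r V))ᶜ :=
      negInv_compl_satSet hd.continuous hr (isOpen_hSet hd hr hVopen)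
    obtain ⟨S, hS, hSX⟩ := exists_negOrbitSet hneg hv
    have hpos : PosInv d r (SatSet d r (HSet d r V))ᶜ :=
      posInv_compl_satSet (hereditary_hSet V)
    have horb : Orb d r S ⊆ (SatSet d r (HSet d r V))ᶜ := orb_subset hpos hSX
    obtain ⟨y, hyO, hyV⟩ := (h2 v S hS).exists_mem_open hVopen hVne
    have hyU : y ∈ SatSet d r (HSet d r V) := mem_iUnion.2 ⟨0, Or.inl hyV⟩
    exact horb hyO hyU
  tfae_have 3 → 1 := by
    intro h3 X hXcl hXinv
    by_cases hX : X = Set.univ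
    · exact Or.inr hX
    refine Or.inl ?_
    have hsat := h3 Xᶜ hXcl.isOpen_compl (nonempty_compl.2 hX)
    have h1 : X ⊆ (HSet d r Xᶜ)ᶜ := by
      intro w hw hmem
      rcases hmem with hmem | ⟨n, e, he, hr0, hlast⟩
      · exact hmem hw
      · have hd0 : d (e 0) ∈ X := path_d_mem hXinv.1 e he (by rw [hlast]; exact hw) 0
        exact hr0 (hXinv.1 _ hd0)
    have h2 : ∀ k, X ⊆ (SatSeq d r (HSet d r Xᶜ) k)ᶜ := by
      intro k
      induction k with
      | zero => exact h1
      | succ m ih =>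
        intro w hw hmem
        rcases hmem with hmem | ⟨hreg, hsub2⟩
        · exact ih hw hmem
        · obtain ⟨f, hrf, hdf⟩ := hXinv.2 w ⟨hw, hreg⟩
          exact ih hdf (hsub2 ⟨f, hrf, rfl⟩)
    have hsub : X ⊆ (SatSet d r (HSet d r Xᶜ))ᶜ := by
      intro w hw hmem
      rcases mem_iUnion.1 hmem with ⟨k, hk⟩
      exact h2 k hw hk
    rw [hsat] at hsub
    exact subset_empty_iff.1 (by simpa using hsub)
  tfae_finish
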